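/- Let σ be a nonnegative Borel measure on ℝ with σ(ℝ) = 1, all power moments finite, and ∫|g|² dσ > 0 for every nonzero complex polynomial g; let (r_n) be the orthonormal polynomials of σ (deg r_n = n, positive leading coefficients, ⟨r_n, r_m⟩_σ = δ_{n,m}); and let T be a linear operator on complex polynomials satisfying conditions (ii) and (iii). Define g_{m,n} := ⟨T(x·r_n), r_m⟩_σ. Then: every g_{m,n} is a real number; g_{m,n} = g_{n,m} for all m, n; g_{m,n} = 0 whenever m > n + 2 (hence whenever |m − n| > 2); and g_{n+2,n} > 0 for all n ≥ 0. In other words, the matrix (g_{m,n}) is a real symmetric five-diagonal matrix with positive entries on the second subdiagonal. -/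

import Mathlib

open Polynomial MeasureTheory

noncomputable section

/-- The standard basis of the space of finitely supported complex sequences. -/
def e (n : ℕ) : ℕ →₀ ℂ := Finsupp.single n 1

/-- The standard basis extended by zero to negative indices. -/
def eZ (n : ℤ) : ℕ →₀ ℂ := if n < 0 then 0 else e n.toNat

/-- Extension of a real sequence by zero to negative indices. -/
def extZ (a : ℕ → ℝ) (n : ℤ) : ℝ := if n < 0 then 0 else a n.toNat

/-- Extension of a sequence of polynomials by zero to negative indices. -/
def extP (p : ℕ → Polynomial ℂ) (n : ℤ) : Polynomial ℂ := if n < 0 then 0 else p n.toNat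


/-- The inner product `⟨u, v⟩_σ = ∫ u(x) conj(v(x)) dσ(x)` of two complex polynomials. -/
def ipm (σ : Measure ℝ) (u v : Polynomial ℂ) : ℂ :=
  ∫ x, u.eval (x : ℂ) * (starRingEnd ℂ) (v.eval (x : ℂ)) ∂σ

/-- All power moments of `σ` are finite. -/
def HasFiniteMoments (σ : Measure ℝ) : Prop := ∀ k : ℕ, Integrable (fun x => x ^ k) σ

/-- `∫ |g|² dσ > 0` for every nonzero complex polynomial `g`. -/
def PosOnPolys (σ : Measure ℝ) : Prop :=
  ∀ g : Polynomial ℂ, g ≠ 0 → 0 < ∫ x, ‖g.eval (x : ℂ)‖ ^ 2 ∂σ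

/-- Condition (ii): for each `k`, `T x^k = ξ_{k,k+1} x^{k+1} + Σ_{j=0}^k ξ_{k,j} x^j`
with `ξ_{k,k+1} > 0` and all `ξ_{k,j}` real. -/
def CondII (T : Module.End ℂ (Polynomial ℂ)) : Prop :=
  ∀ k : ℕ, ∃ ξ : ℕ → ℝ, 0 < ξ (k + 1) ∧
    T (X ^ k) = ∑ j ∈ Finset.range (k + 2), C (ξ j : ℂ) * X ^ j

/-- Condition (iii): `⟨T(x·u), v⟩_σ = ⟨u, T(x·v)⟩_σ` for all polynomials `u`, `v`,
i.e., the operator `T Λ₀` is symmetric. -/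
def CondIII (σ : Measure ℝ) (T : Module.End ℂ (Polynomial ℂ)) : Prop :=
  ∀ u v : Polynomial ℂ, ipm σ (T (X * u)) v = ipm σ u (T (X * v))

/-- The entry `g_{m,n} = ⟨T(x·r_n), r_m⟩_σ`. -/
def gEntry (σ : Measure ℝ) (T : Module.End ℂ (Polynomial ℂ)) (r : ℕ → Polynomial ℂ)
    (m n : ℕ) : ℂ :=
  ipm σ (T (X * r n)) (r m)

namespace GOPAux

variable {σ : Measure ℝ}

lemma integrable_eval (hmom : HasFiniteMoments σ) (q : Polynomial ℂ) :
    Integrable (fun x : ℝ => q.eval (x : ℂ)) σ := by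
  have h : (fun x : ℝ => q.eval (x : ℂ))
      = fun x : ℝ => ∑ k ∈ Finset.range (q.natDegree + 1), q.coeff k * (x : ℂ) ^ k := by
    funext x; exact q.eval_eq_sum_range _
  rw [h]
  refine integrable_finset_sum _ fun k _ => ?_
  have h1 : Integrable (fun x : ℝ => ((x ^ k : ℝ) : ℂ)) σ := (hmom k).ofReal
  simpa using h1.const_mul (q.coeff k)

lemma conj_eval (p : Polynomial ℂ) (x : ℝ) :
    (starRingEnd ℂ) (p.eval (x : ℂ)) = (p.map (starRingEnd ℂ)).eval (x : ℂ) := by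
  induction p using Polynomial.induction_on' with
  | add p q hp hq => simp [hp, hq]
  | monomial n a => simp

lemma mul_conj_eval (u v : Polynomial ℂ) (x : ℝ) :
    u.eval (x : ℂ) * (starRingEnd ℂ) (v.eval (x : ℂ))
      = (u * v.map (starRingEnd ℂ)).eval (x : ℂ) := by
  rw [eval_mul, conj_eval]

lemma ipm_eq (σ : Measure ℝ) (u v : Polynomial ℂ) :
    ipm σ u v = ∫ x : ℝ, (u * v.map (starRingEnd ℂ)).eval (x : ℂ) ∂σ := by
  unfold ipm
  congr 1; funext x; exact mul_conj_eval u v x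

lemma ipm_conj (σ : Measure ℝ) (u v : Polynomial ℂ) :
    ipm σ u v = (starRingEnd ℂ) (ipm σ v u) := by
  unfold ipm
  rw [← integral_conj]
  congr 1; funext x
  simp [mul_comm]

lemma ipm_zero_left (σ : Measure ℝ) (v : Polynomial ℂ) : ipm σ 0 v = 0 := by
  unfold ipm; simp

lemma ipm_add_left (hmom : HasFiniteMoments σ) (u u' v : Polynomial ℂ) :
    ipm σ (u + u') v = ipm σ u v + ipm σ u' v := by
  rw [ipm_eq, ipm_eq, ipm_eq,
    ← integral_add (integrable_eval hmom _) (integrable_eval hmom _)]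
  congr 1; funext x; rw [add_mul, eval_add]

lemma ipm_C_mul_left (σ : Measure ℝ) (a : ℂ) (u v : Polynomial ℂ) :
    ipm σ (C a * u) v = a * ipm σ u v := by
  rw [ipm_eq, ipm_eq, ← integral_const_mul]
  congr 1; funext x; rw [mul_assoc, eval_mul, eval_C]

lemma ipm_sub_left (hmom : HasFiniteMoments σ) (u u' v : Polynomial ℂ) :
    ipm σ (u - u') v = ipm σ u v - ipm σ u' v := by
  have := ipm_add_left hmom (u - u') u' v
  rw [sub_add_cancel] at this
  exact eq_sub_iff_add_eq.mpr this.symm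

lemma ipm_sum_left (hmom : HasFiniteMoments σ) {ι : Type*} (s : Finset ι)
    (f : ι → Polynomial ℂ) (v : Polynomial ℂ) :
    ipm σ (∑ i ∈ s, f i) v = ∑ i ∈ s, ipm σ (f i) v := by
  classical
  induction s using Finset.induction_on with
  | empty => simpa using ipm_zero_left σ v
  | insert _ _ hx ih =>
      rw [Finset.sum_insert hx, Finset.sum_insert hx, ipm_add_left hmom, ih]

lemma ipm_self (σ : Measure ℝ) (g : Polynomial ℂ) :
    ipm σ g g = ((∫ x, ‖g.eval (x : ℂ)‖ ^ 2 ∂σ : ℝ) : ℂ) := by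
  unfold ipm
  have h : (fun x : ℝ => g.eval (x : ℂ) * (starRingEnd ℂ) (g.eval (x : ℂ)))
      = fun x : ℝ => ((‖g.eval (x : ℂ)‖ ^ 2 : ℝ) : ℂ) := by
    funext x
    rw [Complex.mul_conj]
    norm_cast
    rw [Complex.normSq_eq_norm_sq]
  rw [h]; exact integral_ofReal

lemma eq_zero_of_ipm_self (hpos : PosOnPolys σ) (g : Polynomial ℂ)
    (h : ipm σ g g = 0) : g = 0 := by
  by_contra hg
  have h2 := hpos g hg
  rw [ipm_self] at h
  rw [Complex.ofReal_eq_zero.mp h] at h2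
  exact lt_irrefl 0 h2


section Family
variable (r : ℕ → Polynomial ℂ)

lemma r_ne_zero (hdeg : ∀ n : ℕ, (r n).degree = n) (n : ℕ) : r n ≠ 0 := by
  intro h
  have := hdeg n
  rw [h, degree_zero] at this
  exact absurd this.symm (by simp)

lemma r_lead_ne_zero (hdeg : ∀ n : ℕ, (r n).degree = n) (n : ℕ) :
    (r n).leadingCoeff ≠ 0 :=
  leadingCoeff_ne_zero.mpr (r_ne_zero r hdeg n)

lemma span_lemma (hdeg : ∀ n : ℕ, (r n).degree = n) :
    ∀ n : ℕ, ∀ p : Polynomial ℂ, p.degree < (n : ℕ) →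
      ∃ c : ℕ → ℂ, p = ∑ k ∈ Finset.range n, C (c k) * r k := by
  intro n
  induction n with
  | zero =>
      intro p hp
      refine ⟨0, ?_⟩
      simp only [Finset.range_zero, Finset.sum_empty]
      by_contra hp0
      exact absurd hp (not_lt.mpr (by simpa using zero_le_degree_iff.mpr hp0))
  | succ n ih =>
      intro p hp
      have hln : (r n).leadingCoeff ≠ 0 := r_lead_ne_zero r hdeg n
      set a := p.coeff n / (r n).leadingCoeff with ha
      have hcn : (r n).coeff n = (r n).leadingCoeff := by
        rw [leadingCoeff, natDegree_eq_of_degree_eq_some (hdeg n)]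
      have hd : (p - C a * r n).degree < (n : ℕ) := by
        rw [degree_lt_iff_coeff_zero]
        intro m hm
        rcases eq_or_lt_of_le hm with h | h
        · rw [coeff_sub, coeff_C_mul, ← h, hcn, ha, div_mul_cancel₀ _ hln, sub_self]
        · have h1 : p.coeff m = 0 := by
            apply coeff_eq_zero_of_degree_lt
            exact lt_of_lt_of_le hp (by exact_mod_cast h)
          have h2 : (r n).coeff m = 0 := by
            apply coeff_eq_zero_of_degree_lt
            rw [hdeg n]; exact_mod_cast h
          rw [coeff_sub, coeff_C_mul, h1, h2, mul_zero, sub_self]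
      obtain ⟨c, hc⟩ := ih _ hd
      refine ⟨Function.update c n a, ?_⟩
      rw [Finset.sum_range_succ, Function.update_self]
      have hsum : ∑ k ∈ Finset.range n, C (Function.update c n a k) * r k
          = ∑ k ∈ Finset.range n, C (c k) * r k := by
        refine Finset.sum_congr rfl fun k hk => ?_
        rw [Function.update_of_ne (Finset.mem_range.mp hk).ne]
      rw [hsum, ← hc]
      ring

lemma ipm_r_zero (hmom : HasFiniteMoments σ) (hdeg : ∀ n : ℕ, (r n).degree = n)
    (horth : ∀ n m : ℕ, ipm σ (r n) (r m) = if n = m then 1 else 0)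
    {m : ℕ} {p : Polynomial ℂ} (hp : p.degree < (m : ℕ)) : ipm σ p (r m) = 0 := by
  obtain ⟨c, rfl⟩ := span_lemma r hdeg m p hp
  rw [ipm_sum_left hmom]
  refine Finset.sum_eq_zero fun k hk => ?_
  rw [ipm_C_mul_left, horth k m, if_neg (Finset.mem_range.mp hk).ne, mul_zero]

lemma ipm_r_coeff (hmom : HasFiniteMoments σ) (hdeg : ∀ n : ℕ, (r n).degree = n)
    (horth : ∀ n m : ℕ, ipm σ (r n) (r m) = if n = m then 1 else 0)
    {m : ℕ} {p : Polynomial ℂ} (hp : p.degree ≤ (m : ℕ)) :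
    ipm σ p (r m) = p.coeff m / (r m).leadingCoeff := by
  have hln : (r m).leadingCoeff ≠ 0 := r_lead_ne_zero r hdeg m
  set a := p.coeff m / (r m).leadingCoeff with ha
  have hcn : (r m).coeff m = (r m).leadingCoeff := by
    rw [leadingCoeff, natDegree_eq_of_degree_eq_some (hdeg m)]
  have hd : (p - C a * r m).degree < (m : ℕ) := by
    rw [degree_lt_iff_coeff_zero]
    intro j hj
    rcases eq_or_lt_of_le hj with h | h
    · rw [coeff_sub, coeff_C_mul, ← h, hcn, ha, div_mul_cancel₀ _ hln, sub_self]
    · have h1 : p.coeff j = 0 := by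
        apply coeff_eq_zero_of_degree_lt
        exact lt_of_le_of_lt hp (by exact_mod_cast h)
      have h2 : (r m).coeff j = 0 := by
        apply coeff_eq_zero_of_degree_lt
        rw [hdeg m]; exact_mod_cast h
      rw [coeff_sub, coeff_C_mul, h1, h2, mul_zero, sub_self]
  have key : ipm σ (p - C a * r m) (r m) = 0 := ipm_r_zero r hmom hdeg horth hd
  rw [ipm_sub_left hmom, ipm_C_mul_left, horth m m, if_pos rfl, mul_one] at key
  exact sub_eq_zero.mp key

lemma ipm_map_conj (σ : Measure ℝ) (u v : Polynomial ℂ) :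
    ipm σ (u.map (starRingEnd ℂ)) (v.map (starRingEnd ℂ)) = (starRingEnd ℂ) (ipm σ u v) := by
  unfold ipm
  rw [← integral_conj]
  congr 1; funext x
  rw [← conj_eval, ← conj_eval]
  simp [mul_comm]

lemma r_real (hmom : HasFiniteMoments σ) (hpos : PosOnPolys σ)
    (hdeg : ∀ n : ℕ, (r n).degree = n)
    (hlead : ∀ n : ℕ, 0 < ((r n).leadingCoeff).re ∧ ((r n).leadingCoeff).im = 0)
    (horth : ∀ n m : ℕ, ipm σ (r n) (r m) = if n = m then 1 else 0) (n : ℕ) :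
    (r n).map (starRingEnd ℂ) = r n := by
  set r' : ℕ → Polynomial ℂ := fun k => (r k).map (starRingEnd ℂ) with hr'
  have hinj : Function.Injective (starRingEnd ℂ) := (starRingEnd ℂ).injective
  have hdeg' : ∀ k : ℕ, (r' k).degree = k := fun k => by
    rw [hr']; exact (degree_map_eq_of_injective hinj _).trans (hdeg k)
  have horth' : ∀ k m : ℕ, ipm σ (r' k) (r' m) = if k = m then 1 else 0 := fun k m => by
    rw [hr']; simp only
    rw [ipm_map_conj, horth]
    split <;> simp
  have hll : (r' n).leadingCoeff = (r n).leadingCoeff := by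
    rw [hr']; simp only
    rw [leadingCoeff_map_of_injective hinj]
    exact Complex.conj_eq_iff_im.mpr (hlead n).2
  set d := r' n - r n with hd
  have hdd : d.degree < (n : ℕ) := by
    rw [hd]
    calc (r' n - r n).degree
        < (r' n).degree :=
          degree_sub_lt (by rw [hdeg', hdeg]) (r_ne_zero r' hdeg' n) hll
      _ = (n : ℕ) := hdeg' n
  have h1 : ipm σ d (r n) = 0 := ipm_r_zero r hmom hdeg horth hdd
  have h2 : ipm σ d (r' n) = 0 := ipm_r_zero r' hmom hdeg' horth' hdd
  have e1 : ipm σ (r' n) d = 0 := by rw [ipm_conj, h2, map_zero]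
  have e2 : ipm σ (r n) d = 0 := by rw [ipm_conj, h1, map_zero]
  have h3 : ipm σ d d = 0 := by
    calc ipm σ d d = ipm σ (r' n) d - ipm σ (r n) d := by
          rw [← ipm_sub_left hmom, ← hd]
      _ = 0 := by rw [e1, e2, sub_self]
  have h4 : d = 0 := eq_zero_of_ipm_self hpos d h3
  have : r' n = r n := by
    have := sub_eq_zero.mp (hd ▸ h4)
    exact this
  simpa [hr'] using this

end Family

section TLemmas

variable {T : Module.End ℂ (Polynomial ℂ)}

lemma T_C_mul (T : Module.End ℂ (Polynomial ℂ)) (a : ℂ) (q : Polynomial ℂ) :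
    T (C a * q) = C a * T q := by
  rw [← smul_eq_C_mul, ← smul_eq_C_mul, _root_.map_smul]

lemma T_Xpow_real (hII : CondII T) (k : ℕ) :
    (T (X ^ k)).map (starRingEnd ℂ) = T (X ^ k) := by
  obtain ⟨ξ, -, h⟩ := hII k
  rw [h, Polynomial.map_sum]
  refine Finset.sum_congr rfl fun j _ => ?_
  rw [Polynomial.map_mul, Polynomial.map_pow, map_X, map_C, Complex.conj_ofReal]

lemma T_Xpow_degree (hII : CondII T) (k : ℕ) :
    (T (X ^ k)).degree ≤ ((k + 1 : ℕ) : WithBot ℕ) := by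
  obtain ⟨ξ, -, h⟩ := hII k
  rw [h]
  refine (degree_sum_le _ _).trans ?_
  rw [Finset.sup_le_iff]
  intro j hj
  refine (degree_C_mul_X_pow_le _ _).trans ?_
  exact_mod_cast Nat.lt_succ_iff.mp (Finset.mem_range.mp hj)

lemma T_rep (T : Module.End ℂ (Polynomial ℂ)) (d : ℕ) (p : Polynomial ℂ)
    (hp : p.natDegree < d) :
    T p = ∑ i ∈ Finset.range d, C (p.coeff i) * T (X ^ i) := by
  conv_lhs => rw [p.as_sum_range' d hp]
  rw [map_sum]
  refine Finset.sum_congr rfl fun i _ => ?_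
  rw [← C_mul_X_pow_eq_monomial, T_C_mul]

lemma T_real (hII : CondII T) {p : Polynomial ℂ}
    (hp : p.map (starRingEnd ℂ) = p) :
    (T p).map (starRingEnd ℂ) = T p := by
  rw [T_rep T (p.natDegree + 1) p (Nat.lt_succ_self _), Polynomial.map_sum]
  refine Finset.sum_congr rfl fun i _ => ?_
  have hci : (starRingEnd ℂ) (p.coeff i) = p.coeff i := by
    conv_rhs => rw [← hp]
    rw [coeff_map]
  rw [Polynomial.map_mul, map_C, hci, T_Xpow_real hII]

lemma T_degree (hII : CondII T) {d : ℕ} {p : Polynomial ℂ} (hp : p.natDegree ≤ d) :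
    (T p).degree ≤ ((d + 1 : ℕ) : WithBot ℕ) := by
  rw [T_rep T (d + 1) p (Nat.lt_succ_of_le hp)]
  refine (degree_sum_le _ _).trans ?_
  rw [Finset.sup_le_iff]
  intro i hi
  refine (degree_mul_le _ _).trans ?_
  have h1 : (C (p.coeff i)).degree + (T (X ^ i)).degree
      ≤ 0 + ((i + 1 : ℕ) : WithBot ℕ) :=
    add_le_add degree_C_le (T_Xpow_degree hII i)
  refine h1.trans ?_
  rw [zero_add]
  exact_mod_cast Nat.succ_le_succ (Nat.lt_succ_iff.mp (Finset.mem_range.mp hi))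

end TLemmas

end GOPAux

/-- The matrix `g_{m,n} = ⟨T(x·r_n), r_m⟩_σ` is a real symmetric five-diagonal matrix
with positive entries on the second subdiagonal. -/
theorem gMatrix_real_symmetric_fivediagonal (σ : Measure ℝ) [IsProbabilityMeasure σ]
    (hmom : HasFiniteMoments σ) (hpos : PosOnPolys σ)
    (r : ℕ → Polynomial ℂ) (hdeg : ∀ n : ℕ, (r n).degree = n)
    (hlead : ∀ n : ℕ, 0 < ((r n).leadingCoeff).re ∧ ((r n).leadingCoeff).im = 0)
    (horth : ∀ n m : ℕ, ipm σ (r n) (r m) = if n = m then 1 else 0)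
    (T : Module.End ℂ (Polynomial ℂ)) (hII : CondII T) (hIII : CondIII σ T) :
    (∀ m n : ℕ, (gEntry σ T r m n).im = 0) ∧
    (∀ m n : ℕ, gEntry σ T r m n = gEntry σ T r n m) ∧
    (∀ m n : ℕ, n + 2 < m → gEntry σ T r m n = 0) ∧
    (∀ m n : ℕ, n + 2 < m ∨ m + 2 < n → gEntry σ T r m n = 0) ∧
    (∀ n : ℕ, 0 < (gEntry σ T r (n + 2) n).re) := by
  classical
  have hrreal : ∀ n : ℕ, (r n).map (starRingEnd ℂ) = r n := fun n =>
    GOPAux.r_real r hmom hpos hdeg hlead horth n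
  have hXr_real : ∀ n : ℕ, ((X : Polynomial ℂ) * r n).map (starRingEnd ℂ) = X * r n := by
    intro n
    rw [Polynomial.map_mul, map_X, hrreal]
  have hT_real : ∀ n : ℕ, (T (X * r n)).map (starRingEnd ℂ) = T (X * r n) := fun n =>
    GOPAux.T_real hII (hXr_real n)
  have him : ∀ u v : Polynomial ℂ, u.map (starRingEnd ℂ) = u →
      v.map (starRingEnd ℂ) = v → (ipm σ u v).im = 0 := by
    intro u v hu hv
    have h := GOPAux.ipm_map_conj σ u v
    rw [hu, hv] at h
    exact Complex.conj_eq_iff_im.mp h.symm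
  have h1 : ∀ m n : ℕ, (gEntry σ T r m n).im = 0 := fun m n =>
    him _ _ (hT_real n) (hrreal m)
  have h2 : ∀ m n : ℕ, gEntry σ T r m n = gEntry σ T r n m := by
    intro m n
    have e1 : gEntry σ T r m n = (starRingEnd ℂ) (gEntry σ T r n m) := by
      unfold gEntry
      rw [hIII (r n) (r m), GOPAux.ipm_conj]
    rw [e1, Complex.conj_eq_iff_im.mpr (h1 n m)]
  have hXrdeg : ∀ n : ℕ, ((X : Polynomial ℂ) * r n).degree = ((n + 1 : ℕ) : WithBot ℕ) := by
    intro n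
    rw [degree_mul, degree_X, hdeg n]
    exact_mod_cast (by push_cast; ring : ((1 + n : ℕ) : WithBot ℕ) = ((n + 1 : ℕ) : WithBot ℕ))
  have hXrnd : ∀ n : ℕ, ((X : Polynomial ℂ) * r n).natDegree ≤ n + 1 := by
    intro n
    rw [natDegree_le_iff_degree_le, hXrdeg n]
  have hdT : ∀ n : ℕ, (T (X * r n)).degree ≤ ((n + 2 : ℕ) : WithBot ℕ) := fun n =>
    GOPAux.T_degree hII (hXrnd n)
  have h3 : ∀ m n : ℕ, n + 2 < m → gEntry σ T r m n = 0 := by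
    intro m n hmn
    unfold gEntry
    apply GOPAux.ipm_r_zero r hmom hdeg horth
    exact lt_of_le_of_lt (hdT n) (by exact_mod_cast hmn)
  refine ⟨h1, h2, h3, ?_, ?_⟩
  · intro m n h
    rcases h with h | h
    · exact h3 m n h
    · rw [h2]; exact h3 n m h
  · intro n
    obtain ⟨ξ, hξpos, hξ⟩ := hII (n + 1)
    set ℓ := (r n).leadingCoeff with hℓdef
    set L := (r (n + 2)).leadingCoeff with hLdef
    have hℓ0 : ℓ ≠ 0 := GOPAux.r_lead_ne_zero r hdeg n
    have hXr0 : (X : Polynomial ℂ) * r n ≠ 0 :=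
      mul_ne_zero X_ne_zero (GOPAux.r_ne_zero r hdeg n)
    have hlXr : ((X : Polynomial ℂ) * r n).leadingCoeff = ℓ := by
      rw [leadingCoeff_mul, leadingCoeff_X, one_mul]
    set q1 := (X : Polynomial ℂ) * r n - C ℓ * X ^ (n + 1) with hq1
    have hdq1 : q1.degree < ((n + 1 : ℕ) : WithBot ℕ) := by
      rw [hq1, ← hXrdeg n]
      apply degree_sub_lt
      · rw [hXrdeg n, degree_C_mul_X_pow _ hℓ0]
      · exact hXr0
      · rw [hlXr, leadingCoeff_C_mul_X_pow]
    have hq1nd : q1.natDegree ≤ n := by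
      rcases eq_or_ne q1 0 with h | h
      · simp [h]
      · have := (natDegree_lt_iff_degree_lt h).mpr hdq1
        omega
    have hdecomp : T ((X : Polynomial ℂ) * r n) = C ℓ * T (X ^ (n + 1)) + T q1 := by
      have : (X : Polynomial ℂ) * r n = C ℓ * X ^ (n + 1) + q1 := by rw [hq1]; ring
      rw [this, map_add, GOPAux.T_C_mul]
    have hcoef : (T ((X : Polynomial ℂ) * r n)).coeff (n + 2) = ℓ * (ξ (n + 2) : ℂ) := by
      rw [hdecomp, coeff_add, coeff_C_mul]
      have c1 : (T ((X : Polynomial ℂ) ^ (n + 1))).coeff (n + 2) = (ξ (n + 2) : ℂ) := by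
        rw [hξ, finset_sum_coeff]
        rw [Finset.sum_eq_single (n + 2)]
        · rw [coeff_C_mul, coeff_X_pow, if_pos rfl, mul_one]
        · intro j _ hjne
          rw [coeff_C_mul, coeff_X_pow, if_neg (fun hh => hjne hh.symm), mul_zero]
        · intro h
          exact absurd (Finset.mem_range.mpr (by omega)) h
      have c2 : (T q1).coeff (n + 2) = 0 := by
        apply coeff_eq_zero_of_degree_lt
        refine lt_of_le_of_lt (GOPAux.T_degree hII hq1nd) ?_
        exact_mod_cast (by omega : n + 1 < n + 2)
      rw [c1, c2, add_zero]
    have hval : gEntry σ T r (n + 2) n = ((ℓ.re * ξ (n + 2) / L.re : ℝ) : ℂ) := by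
      unfold gEntry
      rw [GOPAux.ipm_r_coeff r hmom hdeg horth (hdT n), hcoef, ← hLdef]
      have hℓre : ℓ = ((ℓ.re : ℝ) : ℂ) := by
        apply Complex.ext
        · rfl
        · rw [Complex.ofReal_im]; exact (hlead n).2
      have hLre : L = ((L.re : ℝ) : ℂ) := by
        apply Complex.ext
        · rfl
        · rw [Complex.ofReal_im]; exact (hlead (n + 2)).2
      rw [hℓre, hLre, ← Complex.ofReal_mul, ← Complex.ofReal_div]
      simp
    rw [hval, Complex.ofReal_re]
    have hp1 := (hlead n).1
    have hp2 := (hlead (n + 2)).1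
    rw [← hℓdef] at hp1
    rw [← hLdef] at hp2
    exact div_pos (mul_pos hp1 hξpos) hp2


end
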